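/- Let H be a finite group, B a finite H-module, M a free abelian group with an H-action admitting a basis permuted by H, and let x be a basis element with stabilizer H_x ⊆ H. Then an element of the H-submodule B ⊗ (⊕_{i} ℤ·h_i(x)) (where h_i range over coset representatives of H/H_x) is H-invariant if and only if it equals N_{H/H_x}(b ⊗ x) := Σ_i h_i(b) ⊗ h_i(x) for some b ∈ B^{H_x}. -/

import Mathlib

section Aux

variable {H : Type} [Group H] [Finite H]
    {B : Type} [AddCommGroup B] [DistribMulAction H B]
    {ι : Type} [MulAction H ι] {x : ι}
    (rep : H ⧸ MulAction.stabilizer H x → H)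
    (hrep : ∀ c, (QuotientGroup.mk (rep c) : H ⧸ MulAction.stabilizer H x) = c)

include hrep in
lemma rep_smul_eq (h : H) : rep (QuotientGroup.mk h) • x = h • x := by
  have : (rep (QuotientGroup.mk h))⁻¹ * h ∈ MulAction.stabilizer H x := by
    rw [← QuotientGroup.eq, hrep]
  have hx : ((rep (QuotientGroup.mk h))⁻¹ * h) • x = x := this
  calc rep (QuotientGroup.mk h) • x
      = rep (QuotientGroup.mk h) • ((rep (QuotientGroup.mk h))⁻¹ * h) • x := by rw [hx]
    _ = h • x := by rw [← mul_smul, ← mul_assoc, mul_inv_cancel, one_mul]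

include hrep in
lemma rep_inj : Function.Injective (fun c : H ⧸ MulAction.stabilizer H x => rep c • x) := by
  intro c c' h
  simp only at h
  have : (rep c')⁻¹ * rep c ∈ MulAction.stabilizer H x := by
    simpa [MulAction.mem_stabilizer_iff, mul_smul, h] using
      (inv_smul_smul (rep c') x)
  have := (QuotientGroup.eq (s := MulAction.stabilizer H x)
    (a := rep c') (b := rep c)).2 this
  rwa [hrep, hrep, eq_comm] at this

noncomputable local instance : Fintype (H ⧸ MulAction.stabilizer H x) := Fintype.ofFinite _

include hrep in
lemma norm_apply (b : B) (hb : ∀ g ∈ MulAction.stabilizer H x, g • b = b) (h : H) :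
    (∑ᶠ c : H ⧸ MulAction.stabilizer H x,
        Finsupp.single (rep c • x) (rep c • b)) (h • x) = h • b := by
  classical
  rw [finsum_eq_sum_of_fintype, Finsupp.finset_sum_apply]
  rw [Finset.sum_eq_single (QuotientGroup.mk h : H ⧸ MulAction.stabilizer H x)]
  · rw [rep_smul_eq rep hrep, Finsupp.single_eq_same]
    have hs : (rep (QuotientGroup.mk h))⁻¹ * h ∈ MulAction.stabilizer H x := by
      rw [← QuotientGroup.eq, hrep]
    calc rep (QuotientGroup.mk h) • b
        = rep (QuotientGroup.mk h) • ((rep (QuotientGroup.mk h))⁻¹ * h) • b := by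
          rw [hb _ hs]
      _ = h • b := by rw [← mul_smul, ← mul_assoc, mul_inv_cancel, one_mul]
  · intro c _ hc
    apply Finsupp.single_eq_of_ne'
    intro hcx
    exact hc (rep_inj rep hrep (show rep c • x = rep (QuotientGroup.mk h) • x by
      rw [hcx, rep_smul_eq rep hrep]))
  · intro hmem; exact absurd (Finset.mem_univ _) hmem

lemma norm_apply_not_mem (b : B) (i : ι) (hi : i ∉ MulAction.orbit H x) :
    (∑ᶠ c : H ⧸ MulAction.stabilizer H x,
        Finsupp.single (rep c • x) (rep c • b)) i = 0 := by
  classical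
  rw [finsum_eq_sum_of_fintype, Finsupp.finset_sum_apply]
  apply Finset.sum_eq_zero
  intro c _
  apply Finsupp.single_eq_of_ne
  intro hcx
  exact hi (hcx ▸ ⟨rep c, rfl⟩)

end Aux

/-- Let `H` be a finite group, `B` a finite `H`-module, and let `H` permute a basis of a
free abelian group; let `x` be a basis element with stabilizer `H_x`.  Modelling the span
of the orbit of `x` inside `B ⊗ M` by finitely supported functions supported on the orbit
of `x`, an element of this submodule is `H`-invariant if and only if it is the relative
norm `N_{H/H_x}(b ⊗ x) = Σᵢ hᵢ(b) ⊗ hᵢ(x)` of some `b ∈ B^{H_x}`, where the `hᵢ` are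
coset representatives of `H/H_x`. -/
theorem invariant_iff_norm (H : Type) [Group H] [Finite H]
    (B : Type) [AddCommGroup B] [Finite B] [DistribMulAction H B]
    (ι : Type) [MulAction H ι] (x : ι)
    (rep : H ⧸ MulAction.stabilizer H x → H)
    (hrep : ∀ c, (QuotientGroup.mk (rep c) : H ⧸ MulAction.stabilizer H x) = c)
    (f : ι →₀ B) (hsupp : ∀ i, f i ≠ 0 → i ∈ MulAction.orbit H x) :
    (∀ (h : H) (i : ι), h • f (h⁻¹ • i) = f i) ↔
      ∃ b : B, (∀ h ∈ MulAction.stabilizer H x, h • b = b) ∧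
        f = ∑ᶠ c : H ⧸ MulAction.stabilizer H x,
              Finsupp.single (rep c • x) (rep c • b) := by
  constructor
  · intro hf
    refine ⟨f x, ?_, ?_⟩
    · intro h hh
      have := hf h x
      rwa [show h⁻¹ • x = x from (MulAction.mem_stabilizer_iff.1 (inv_mem hh))] at this
    · ext i
      by_cases hi : i ∈ MulAction.orbit H x
      · obtain ⟨h, rfl⟩ := hi
        rw [norm_apply rep hrep]
        · have := hf h (h • x)
          rw [inv_smul_smul] at this
          exact this.symm
        · intro g hg
          have := hf g x
          rwa [show g⁻¹ • x = x from (MulAction.mem_stabilizer_iff.1 (inv_mem hg))] at this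
      · rw [norm_apply_not_mem rep (f x) i hi]
        by_contra h
        exact hi (hsupp i h)
  · rintro ⟨b, hb, rfl⟩
    intro h i
    by_cases hi : i ∈ MulAction.orbit H x
    · obtain ⟨g, rfl⟩ := hi
      rw [norm_apply rep hrep b hb g, show h⁻¹ • g • x = (h⁻¹ * g) • x from (mul_smul _ _ _).symm,
        norm_apply rep hrep b hb, ← mul_smul, ← mul_assoc, mul_inv_cancel, one_mul]
    · have hi' : h⁻¹ • i ∉ MulAction.orbit H x := by
        intro ⟨g, hg⟩
        refine hi ⟨h * g, ?_⟩
        show (h * g) • x = i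
        rw [mul_smul, show g • x = h⁻¹ • i from hg, smul_inv_smul]
      rw [norm_apply_not_mem rep b i hi, norm_apply_not_mem rep b _ hi', smul_zero]
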